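/- Mardia's excess kurtosis of the SDB skew-normal distribution admits the closed form γ_{2,d} = 2(π−3)·(μ⁽²⁾)ᵀ(I_d ⊙ Σ⁻¹)² μ⁽²⁾, where μ_j = √(2/π)λ_j, μ⁽²⁾ = (μ₁²,…,μ_d²)ᵀ, Σ = Δ + (1−2/π)Λ², and ⊙ denotes the Hadamard (componentwise) product, so I_d ⊙ Σ⁻¹ = diag(σ^{11},…,σ^{dd}). -/

import Mathlib

open Real

/-- Mardia's excess kurtosis of the SDB skew-normal distribution:
`γ_{2,d} = Σ κ_{rstu} σ^{rs} σ^{tu}` equals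
`2(π-3) (μ⁽²⁾)ᵀ (I_d ⊙ Σ⁻¹)² μ⁽²⁾`, where `κ_{rstu} = 2(π-3)(2/π)² λ_r⁴`
for `r = s = t = u` and `0` otherwise, `μ_j = √(2/π) λ_j`, and
`Σ = Δ + (1-2/π) Λ²`, with `I_d ⊙ Σ⁻¹ = diag(σ^{11},…,σ^{dd})`. -/
theorem sdb_mardia_kurtosis_closed_form {d : ℕ} (lam : Fin d → ℝ)
    (Δ : Matrix (Fin d) (Fin d) ℝ) (hΔ : Δ.PosDef)
    (Sg : Matrix (Fin d) (Fin d) ℝ)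
    (hSg : Sg = Δ + (1 - 2 / Real.pi) •
      Matrix.diagonal (fun i => lam i ^ 2))
    (κ : Fin d → Fin d → Fin d → Fin d → ℝ)
    (hκ : ∀ r s t u, κ r s t u =
      if r = s ∧ s = t ∧ t = u then
        2 * (Real.pi - 3) * (2 / Real.pi) ^ 2 * lam r ^ 4
      else 0) :
    (∑ r, ∑ s, ∑ t, ∑ u, κ r s t u * Sg⁻¹ r s * Sg⁻¹ t u)
      = 2 * (Real.pi - 3) *
        dotProduct (fun j => (Real.sqrt (2 / Real.pi) * lam j) ^ 2)
          (((Matrix.diagonal fun j => Sg⁻¹ j j) ^ 2).mulVec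
            fun j => (Real.sqrt (2 / Real.pi) * lam j) ^ 2) := by
  have hπ : (0:ℝ) < Real.pi := Real.pi_pos
  have hsq : Real.sqrt (2 / Real.pi) ^ 2 = 2 / Real.pi :=
    Real.sq_sqrt (by positivity)
  have hd2 : ((Matrix.diagonal fun j => Sg⁻¹ j j) ^ 2 : Matrix (Fin d) (Fin d) ℝ)
      = Matrix.diagonal fun j => (Sg⁻¹ j j) ^ 2 := by
    rw [sq, Matrix.diagonal_mul_diagonal]
    simp [sq]
  rw [hd2]
  simp only [hκ, dotProduct, Matrix.mulVec_diagonal]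
  rw [Finset.mul_sum]
  have : ∀ r : Fin d, (∑ s, ∑ t, ∑ u,
      (if r = s ∧ s = t ∧ t = u then
        2 * (Real.pi - 3) * (2 / Real.pi) ^ 2 * lam r ^ 4 else 0)
        * Sg⁻¹ r s * Sg⁻¹ t u)
      = 2 * (Real.pi - 3) *
        ((Real.sqrt (2 / Real.pi) * lam r) ^ 2 *
          ((Sg⁻¹ r r) ^ 2 * (Real.sqrt (2 / Real.pi) * lam r) ^ 2)) := by
    intro r
    rw [Finset.sum_eq_single r, Finset.sum_eq_single r, Finset.sum_eq_single r]
    · rw [if_pos ⟨rfl, rfl, rfl⟩, mul_pow, hsq]; ring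
    · intro u _ hu; simp [hu.symm]
    · simp
    · intro t _ ht
      simp only [ht.symm, and_false, false_and, if_false, zero_mul, Finset.sum_const_zero]
    · simp
    · intro s _ hs
      simp only [hs.symm, false_and, if_false, zero_mul, Finset.sum_const_zero]
    · simp
  exact Finset.sum_congr rfl fun r _ => this r
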